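/- Let μ and λ be two fuzzy n-ary subgroups of an n-ary group (G,f) with the same family of level subsets, i.e. {μ_t : t ∈ Im(μ)} = {λ_s : s ∈ Im(λ)}. Suppose Im(μ) = {t_1,...,t_m} and Im(λ) = {s_1,...,s_p} with t_1 > t_2 > ... > t_m and s_1 > s_2 > ... > s_p. Then: (i) m = p; (ii) μ_{t_i} = λ_{s_i} for i = 1,...,m; and (iii) for every x ∈ G and i ∈ {1,...,m}, if μ(x) = t_i then λ(x) = s_i. -/

import Mathlib

open Classical

variable {G : Type*}

/-- The composition appearing in the (i,j)-associativity law: apply `f` to the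
sequence `x : Fin (2n-1) → G` with an inner application of `f` starting at position `i`. -/
def nAryComp {n : ℕ} (f : (Fin n → G) → G) (i : Fin n) (x : Fin (2 * n - 1) → G) : G :=
  f (fun k => if (k : ℕ) < (i : ℕ) then
        x ⟨(k : ℕ), by have hk := k.isLt; omega⟩
      else if (k : ℕ) = (i : ℕ) then
        f (fun m => x ⟨(i : ℕ) + (m : ℕ), by have hi := i.isLt; have hm := m.isLt; omega⟩)
      else x ⟨(k : ℕ) + n - 1, by have hk := k.isLt; omega⟩)

/-- `(G, f)` is an `n`-ary group: `f` is associative and all equations are uniquely solvable. -/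
structure IsNAryGroup (n : ℕ) (f : (Fin n → G) → G) : Prop where
  assoc : ∀ (i j : Fin n) (x : Fin (2 * n - 1) → G), nAryComp f i x = nAryComp f j x
  solv : ∀ (i : Fin n) (x : Fin n → G) (x₀ : G), ∃! z : G, f (Function.update x i z) = x₀

/-- `y` is the skew element of `x`: `f(x,...,x,y) = x` with `x` repeated `n-1` times. -/
def IsSkew {n : ℕ} (f : (Fin n → G) → G) (x y : G) : Prop :=
  f (fun k => if (k : ℕ) = n - 1 then y else x) = x

/-- `H` is an `n`-ary subgroup of `(G,f)`. -/
def IsNArySubgroup {n : ℕ} (f : (Fin n → G) → G) (H : Set G) : Prop :=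
  H.Nonempty ∧ (∀ x : Fin n → G, (∀ i, x i ∈ H) → f x ∈ H) ∧
    ∀ x y : G, x ∈ H → IsSkew f x y → y ∈ H

/-- `μ` is a fuzzy `n`-ary subgroup of `(G,f)`. -/
def IsFuzzyNArySubgroup {n : ℕ} (f : (Fin n → G) → G) (μ : G → ℝ) : Prop :=
  (∀ x : Fin n → G, (⨅ i, μ (x i)) ≤ μ (f x)) ∧
    ∀ x y : G, IsSkew f x y → μ x ≤ μ y

/-- Let `μ` and `λ` be fuzzy `n`-ary subgroups of `(G,f)` with the same family of level
subsets, `Im(μ) = {t₁ > ... > t_m}` and `Im(λ) = {s₁ > ... > s_p}`. Then `m = p`,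
`μ_{tᵢ} = λ_{sᵢ}` for all `i`, and `μ(x) = tᵢ` implies `λ(x) = sᵢ`. -/
theorem stmt10 [Nonempty G] {n : ℕ} (hn : 2 ≤ n)
    (f : (Fin n → G) → G) (hf : IsNAryGroup n f)
    (μ lam : G → ℝ)
    (hμ : ∀ x, μ x ∈ Set.Icc (0 : ℝ) 1) (hlam : ∀ x, lam x ∈ Set.Icc (0 : ℝ) 1)
    (hfμ : IsFuzzyNArySubgroup f μ) (hflam : IsFuzzyNArySubgroup f lam)
    (m p : ℕ) (t : Fin m → ℝ) (s : Fin p → ℝ)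
    (htanti : StrictAnti t) (hsanti : StrictAnti s)
    (hImμ : Set.range μ = Set.range t) (hImlam : Set.range lam = Set.range s)
    (hlev : {S : Set G | ∃ i : Fin m, S = {x : G | t i ≤ μ x}} =
            {S : Set G | ∃ j : Fin p, S = {x : G | s j ≤ lam x}}) :
    ∃ h : m = p,
      (∀ i : Fin m, {x : G | t i ≤ μ x} = {x : G | s (Fin.cast h i) ≤ lam x}) ∧
        ∀ (x : G) (i : Fin m), μ x = t i → lam x = s (Fin.cast h i) := by
  classical
  -- level set families
  set A : Fin m → Set G := fun i => {x : G | t i ≤ μ x} with hAdef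
  set B : Fin p → Set G := fun j => {x : G | s j ≤ lam x} with hBdef
  -- every t i is attained by μ
  have htatt : ∀ i : Fin m, ∃ x : G, μ x = t i := by
    intro i
    have : t i ∈ Set.range μ := hImμ ▸ ⟨i, rfl⟩
    exact this
  have hsatt : ∀ j : Fin p, ∃ x : G, lam x = s j := by
    intro j
    have : s j ∈ Set.range lam := hImlam ▸ ⟨j, rfl⟩
    exact this
  -- A and B are strictly monotone
  have hA : StrictMono A := by
    intro i j hij
    have hle : A i ≤ A j := fun x hx => le_trans (le_of_lt (htanti hij)) hx
    obtain ⟨x, hx⟩ := htatt j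
    refine lt_of_le_of_ne hle (fun h => ?_)
    have hxj : x ∈ A j := le_of_eq hx.symm
    rw [← h] at hxj
    have : t i ≤ t j := hx ▸ hxj
    exact absurd this (not_le.mpr (htanti hij))
  have hB : StrictMono B := by
    intro i j hij
    have hle : B i ≤ B j := fun x hx => le_trans (le_of_lt (hsanti hij)) hx
    obtain ⟨x, hx⟩ := hsatt j
    refine lt_of_le_of_ne hle (fun h => ?_)
    have hxj : x ∈ B j := le_of_eq hx.symm
    rw [← h] at hxj
    have : s i ≤ s j := hx ▸ hxj
    exact absurd this (not_le.mpr (hsanti hij))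
  -- translation maps between index sets
  have hAB : ∀ i : Fin m, ∃ j : Fin p, A i = B j := by
    intro i
    have : A i ∈ {S : Set G | ∃ j : Fin p, S = B j} := hlev ▸ ⟨i, rfl⟩
    exact this
  have hBA : ∀ j : Fin p, ∃ i : Fin m, B j = A i := by
    intro j
    have : B j ∈ {S : Set G | ∃ i : Fin m, S = A i} := hlev ▸ ⟨j, rfl⟩
    exact this
  choose g hg using hAB
  choose g' hg' using hBA
  have hgmono : StrictMono g := by
    intro i j hij
    have : B (g i) < B (g j) := by rw [← hg i, ← hg j]; exact hA hij
    exact hB.lt_iff_lt.mp this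
  have hg'mono : StrictMono g' := by
    intro i j hij
    have : A (g' i) < A (g' j) := by rw [← hg' i, ← hg' j]; exact hB hij
    exact hA.lt_iff_lt.mp this
  have hmp : m ≤ p := by
    simpa using Fintype.card_le_of_injective g hgmono.injective
  have hpm : p ≤ m := by
    simpa using Fintype.card_le_of_injective g' hg'mono.injective
  have h : m = p := le_antisymm hmp hpm
  -- g is the canonical cast
  have hgid : ∀ i : Fin m, g i = Fin.cast h i := by
    have hmono2 : StrictMono (fun i : Fin m => Fin.cast h.symm (g i)) := by
      intro i j hij
      exact Fin.lt_def.mpr (Fin.lt_def.mp (hgmono hij))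
    have hsurj : Function.Surjective (fun i : Fin m => Fin.cast h.symm (g i)) :=
      Finite.surjective_of_injective hmono2.injective
    have hrange : Set.range (fun i : Fin m => Fin.cast h.symm (g i)) =
        Set.range (id : Fin m → Fin m) := by
      rw [Set.range_id, Set.range_eq_univ]; exact hsurj
    haveI : WellFoundedLT (Fin m) := inferInstance
    have heq := (hmono2.range_inj strictMono_id).1 hrange
    intro i
    have h2 : Fin.cast h.symm (g i) = i := congrFun heq i
    have h3 : (g i : ℕ) = (i : ℕ) := congrArg Fin.val h2
    exact Fin.ext h3
  have hgg' : ∀ j : Fin p, g (g' j) = j := by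
    intro j
    apply hB.injective
    rw [← hg (g' j), ← hg' j]
  have hlevels : ∀ i : Fin m, A i = B (Fin.cast h i) := by
    intro i; rw [← hgid i]; exact hg i
  refine ⟨h, hlevels, ?_⟩
  intro x i hxi
  -- x ∈ A i, hence s (cast h i) ≤ lam x
  have hx1 : x ∈ A i := le_of_eq hxi.symm
  have hx2 : x ∈ B (Fin.cast h i) := (hlevels i) ▸ hx1
  have hle1 : s (Fin.cast h i) ≤ lam x := hx2
  -- lam x = s j for some j
  have : lam x ∈ Set.range s := hImlam ▸ ⟨x, rfl⟩
  obtain ⟨j, hj⟩ := this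
  -- x ∈ B j, hence x ∈ A (g' j), hence t (g' j) ≤ t i, so i ≤ g' j
  have hxBj : x ∈ B j := le_of_eq hj
  have hxA : x ∈ A (g' j) := (hg' j) ▸ hxBj
  have ht2 : t (g' j) ≤ t i := hxi ▸ hxA
  have hile : i ≤ g' j := htanti.le_iff_ge.mp ht2
  have hcast : Fin.cast h i ≤ j := by
    have := hgmono.monotone hile
    rw [hgg' j, hgid i] at this
    exact this
  have hle2 : lam x ≤ s (Fin.cast h i) := hj ▸ hsanti.antitone hcast
  exact le_antisymm hle2 hle1
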